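/- Let a₁, a₂, a₃, a₄ ∈ ℝ² with a₄ in the interior of the triangle a₁a₂a₃ (a generic non-convex configuration). Then the six pairwise sums a_i + a_j (1 ≤ i < j ≤ 4) are the vertices of a centrally symmetric convex hexagon, with center c = (a₁+a₂+a₃+a₄)/2; specifically, a_i + a_j and a_k + a_l are symmetric through c whenever {i,j,k,l} = {1,2,3,4}. -/

import Mathlib

/-- dot product on `ℝ × ℝ` -/
def dt (v z : ℝ × ℝ) : ℝ := v.1 * z.1 + v.2 * z.2

/-- determinant of the triangle `p q r` -/
def dett (p q r : ℝ × ℝ) : ℝ :=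
  (q.1 - p.1) * (r.2 - p.2) - (q.2 - p.2) * (r.1 - p.1)

lemma dt_add (v a b : ℝ × ℝ) : dt v (a + b) = dt v a + dt v b := by
  simp [dt]; ring

lemma sep3 {p q r : ℝ × ℝ} (h : dett p q r ≠ 0) :
    ∃ v : ℝ × ℝ, dt v p = dt v q ∧ dt v r < dt v p := by
  rcases h.lt_or_gt with hlt | hgt
  · refine ⟨(-(q.2 - p.2), q.1 - p.1), ?_, ?_⟩
    · simp only [dt]; ring
    · unfold dett at hlt; simp only [dt]; nlinarith [hlt]
  · refine ⟨(q.2 - p.2, -(q.1 - p.1)), ?_, ?_⟩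
    · simp only [dt]; ring
    · unfold dett at hgt; simp only [dt]; nlinarith [hgt]

lemma sep3' {p q r : ℝ × ℝ} (h : dett p q r ≠ 0) :
    ∃ v : ℝ × ℝ, dt v p = dt v q ∧ dt v p < dt v r := by
  obtain ⟨v, h1, h2⟩ := sep3 h
  refine ⟨-v, ?_, ?_⟩ <;> simp only [dt, Prod.fst_neg, Prod.snd_neg] at * <;> nlinarith

lemma not_mem_hull (v : ℝ × ℝ) {x : ℝ × ℝ} {T : Set (ℝ × ℝ)}
    (h : ∀ y ∈ T, dt v y < dt v x) : x ∉ convexHull ℝ T := by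
  intro hx
  have hc : Convex ℝ {z : ℝ × ℝ | dt v z < dt v x} := by
    refine convex_halfSpace_lt ⟨fun a b => ?_, fun c a => ?_⟩ _
    · simp [dt]; ring
    · simp [dt]; ring
  have h2 : dt v x < dt v x := convexHull_min h hc hx
  exact lt_irrefl _ h2

lemma line_of_det {p q r : ℝ × ℝ} (h0 : dett p q r = 0) (hd : q - p ≠ 0) :
    ∃ t : ℝ, r = t • (q - p) + p := by
  have key : (q.1 - p.1) * (r.2 - p.2) = (q.2 - p.2) * (r.1 - p.1) := by
    unfold dett at h0; linarith
  have hcases : q.1 - p.1 ≠ 0 ∨ q.2 - p.2 ≠ 0 := by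
    by_contra hcc
    push_neg at hcc
    exact hd (by ext <;> simp [hcc.1, hcc.2])
  rcases hcases with h1 | h2
  · refine ⟨(r.1 - p.1) / (q.1 - p.1), ?_⟩
    ext
    · simp; field_simp; ring
    · simp; field_simp; linear_combination key
  · refine ⟨(r.2 - p.2) / (q.2 - p.2), ?_⟩
    ext
    · simp; field_simp; linear_combination -key
    · simp; field_simp; ring

lemma collinear_contra {x y z p d : ℝ × ℝ} (hd : d ≠ 0) {tx ty tz : ℝ}
    (hx : x = tx • d + p) (hy : y = ty • d + p) (hz : z = tz • d + p)
    (h1 : tx ≠ ty) (h2 : ty ≠ tz) (h3 : tx ≠ tz) :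
    x ≠ y ∧ y ≠ z ∧ x ≠ z ∧ Collinear ℝ ({x, y, z} : Set (ℝ × ℝ)) := by
  have key : ∀ a b : ℝ, a ≠ b → a • d + p ≠ b • d + p := by
    intro a b hab h
    have h' : (a - b) • d = 0 := by
      rw [sub_smul, sub_eq_zero]
      exact add_right_cancel h
    rcases smul_eq_zero.1 h' with h'' | h''
    · exact hab (sub_eq_zero.1 h'')
    · exact hd h''
  refine ⟨by rw [hx, hy]; exact key _ _ h1, by rw [hy, hz]; exact key _ _ h2,
    by rw [hx, hz]; exact key _ _ h3, ?_⟩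
  rw [collinear_iff_exists_forall_eq_smul_vadd]
  refine ⟨p, d, ?_⟩
  intro q hq
  simp only [Set.mem_insert_iff, Set.mem_singleton_iff] at hq
  rcases hq with rfl | rfl | rfl
  · exact ⟨tx, by rw [vadd_eq_add]; exact hx⟩
  · exact ⟨ty, by rw [vadd_eq_add]; exact hy⟩
  · exact ⟨tz, by rw [vadd_eq_add]; exact hz⟩

/-- For a non-convex configuration (with `a₄` interior to the triangle `a₁a₂a₃`) and
generic, the six pairwise sums are the vertices of a centrally symmetric convex hexagon
with center `c = (a₁+a₂+a₃+a₄)/2`: each sum is a vertex of the convex hull of the six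
sums, and `aᵢ+aⱼ`, `aₖ+aₗ` are symmetric through `c` whenever `{i,j,k,l} = {1,2,3,4}`. -/
theorem level2_of_nonconvex_configuration (a₁ a₂ a₃ a₄ : ℝ × ℝ)
    (hint : ∃ α β γ : ℝ, 0 < α ∧ 0 < β ∧ 0 < γ ∧ α + β + γ = 1 ∧
      a₄ = α • a₁ + β • a₂ + γ • a₃)
    (S : Set (ℝ × ℝ))
    (hS : S = {a₁ + a₂, a₁ + a₃, a₁ + a₄, a₂ + a₃, a₂ + a₄, a₃ + a₄})
    (hgen : ∀ x ∈ S, ∀ y ∈ S, ∀ z ∈ S, x ≠ y → y ≠ z → x ≠ z →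
      ¬ Collinear ℝ ({x, y, z} : Set (ℝ × ℝ))) :
    (∀ x ∈ S, x ∉ convexHull ℝ (S \ {x})) ∧
    (∀ x ∈ S, (a₁ + a₂ + a₃ + a₄) - x ∈ S) ∧
    midpoint ℝ (a₁ + a₂) (a₃ + a₄) = (2⁻¹ : ℝ) • (a₁ + a₂ + a₃ + a₄) ∧
    midpoint ℝ (a₁ + a₃) (a₂ + a₄) = (2⁻¹ : ℝ) • (a₁ + a₂ + a₃ + a₄) ∧
    midpoint ℝ (a₁ + a₄) (a₂ + a₃) = (2⁻¹ : ℝ) • (a₁ + a₂ + a₃ + a₄) := by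
  obtain ⟨α, β, γ, hα, hβ, hγ, hs, h4⟩ := hint
  have hm : ∀ x y : ℝ × ℝ, midpoint ℝ x y = (2⁻¹ : ℝ) • (x + y) := by
    intro x y; rw [midpoint_eq_smul_add, invOf_eq_inv]
  refine ⟨?_, ?_, ?_, ?_, ?_⟩
  · -- extreme points
    by_cases hdeg : a₁ = a₂ ∧ a₁ = a₃
    · obtain ⟨h2, h3⟩ := hdeg
      have h4' : a₄ = a₁ := by
        rw [h4, ← h2, ← h3, show α = 1 - β - γ from by linarith]; module
      subst h2; subst h3; subst h4'
      intro x hx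
      rw [hS] at hx
      simp only [Set.mem_insert_iff, Set.mem_singleton_iff, or_self] at hx
      have hempty : S \ {x} = ∅ := by
        rw [hS, hx]; ext z; simp
      rw [hempty, convexHull_empty]
      exact Set.notMem_empty _
    · have hdet : dett a₁ a₂ a₃ ≠ 0 := by
        intro h0
        by_cases h12 : a₁ = a₂
        · have h13 : a₁ ≠ a₃ := fun h => hdeg ⟨h12, h⟩
          have hd : a₃ - a₁ ≠ 0 := sub_ne_zero_of_ne (Ne.symm h13)
          have e1 : a₁ + a₂ = (0 : ℝ) • (a₃ - a₁) + (a₁ + a₁) := by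
            rw [← h12]; module
          have e2 : a₁ + a₃ = (1 : ℝ) • (a₃ - a₁) + (a₁ + a₁) := by module
          have e3 : a₁ + a₄ = γ • (a₃ - a₁) + (a₁ + a₁) := by
            rw [h4, ← h12, show α = 1 - β - γ from by linarith]; module
          have hne1 : (0 : ℝ) ≠ 1 := by norm_num
          have hne2 : (1 : ℝ) ≠ γ := fun h => by
            have : α + β = 0 := by linarith
            linarith
          have hne3 : (0 : ℝ) ≠ γ := fun h => by linarith
          obtain ⟨n1, n2, n3, hcol⟩ := collinear_contra hd e1 e2 e3 hne1 (by
            intro h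
            exact hne2 h) hne3
          exact hgen _ (by rw [hS]; simp) _ (by rw [hS]; simp) _ (by rw [hS]; simp)
            n1 n2 n3 hcol
        · have hd : a₂ - a₁ ≠ 0 := sub_ne_zero_of_ne (Ne.symm h12)
          obtain ⟨s, hs3⟩ := line_of_det h0 hd
          have e12 : a₁ + a₂ = (1 : ℝ) • (a₂ - a₁) + (a₁ + a₁) := by module
          have e13 : a₁ + a₃ = s • (a₂ - a₁) + (a₁ + a₁) := by rw [hs3]; module
          have e23 : a₂ + a₃ = (1 + s) • (a₂ - a₁) + (a₁ + a₁) := by rw [hs3]; module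
          have e14 : a₁ + a₄ = (β + γ * s) • (a₂ - a₁) + (a₁ + a₁) := by
            rw [h4, hs3, show α = 1 - β - γ from by linarith]; module
          by_cases hs0 : s = 0
          · subst hs0
            obtain ⟨n1, n2, n3, hcol⟩ := collinear_contra hd e13 e14 e12
              (show (0:ℝ) ≠ β + γ * 0 by intro h; linarith)
              (show β + γ * 0 ≠ 1 by intro h; linarith)
              (show (0:ℝ) ≠ 1 by norm_num)
            exact hgen _ (by rw [hS]; simp) _ (by rw [hS]; simp) _ (by rw [hS]; simp)
              n1 n2 n3 hcol
          · by_cases hs1 : s = 1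
            · subst hs1
              obtain ⟨n1, n2, n3, hcol⟩ := collinear_contra hd e14 e12 e23
                (show β + γ * 1 ≠ 1 by intro h; nlinarith)
                (show (1:ℝ) ≠ 1 + 1 by norm_num)
                (show β + γ * 1 ≠ 1 + 1 by intro h; nlinarith)
              exact hgen _ (by rw [hS]; simp) _ (by rw [hS]; simp) _ (by rw [hS]; simp)
                n1 n2 n3 hcol
            · obtain ⟨n1, n2, n3, hcol⟩ := collinear_contra hd e12 e13 e23
                (show (1:ℝ) ≠ s from fun h => hs1 h.symm)
                (show s ≠ 1 + s by intro h; linarith)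
                (show (1:ℝ) ≠ 1 + s by intro h; exact hs0 (by linarith))
              exact hgen _ (by rw [hS]; simp) _ (by rw [hS]; simp) _ (by rw [hS]; simp)
                n1 n2 n3 hcol
      have hdet2 : dett a₂ a₃ a₁ ≠ 0 := fun h => hdet (by unfold dett at *; linarith)
      have hdet3 : dett a₁ a₃ a₂ ≠ 0 := fun h => hdet (by unfold dett at *; linarith)
      intro x hx
      rw [hS] at hx
      simp only [Set.mem_insert_iff, Set.mem_singleton_iff] at hx
      have e4gen : ∀ v : ℝ × ℝ, dt v a₄ = α * dt v a₁ + β * dt v a₂ + γ * dt v a₃ := by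
        intro v; rw [h4]; simp [dt]; ring
      rcases hx with rfl | rfl | rfl | rfl | rfl | rfl
      · -- x = a₁ + a₂
        obtain ⟨v, h12, h3⟩ := sep3 hdet
        have e4 := e4gen v
        rw [← h12] at e4
        have h' : dt v a₄ = dt v a₁ - γ * (dt v a₁ - dt v a₃) := by
          rw [e4]; linear_combination dt v a₁ * hs
        have hb : dt v a₄ < dt v a₁ := by
          nlinarith [mul_pos hγ (sub_pos.2 h3)]
        apply not_mem_hull v
        intro y hy
        rw [hS] at hy
        simp only [Set.mem_diff, Set.mem_insert_iff, Set.mem_singleton_iff] at hy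
        obtain ⟨hyS, hyx⟩ := hy
        rcases hyS with rfl | rfl | rfl | rfl | rfl | rfl <;>
          first
          | exact absurd rfl hyx
          | (simp only [dt_add]; linarith)
      · -- x = a₁ + a₃
        obtain ⟨v, h13, h2⟩ := sep3 hdet3
        have e4 := e4gen v
        rw [← h13] at e4
        have h' : dt v a₄ = dt v a₁ - β * (dt v a₁ - dt v a₂) := by
          rw [e4]; linear_combination dt v a₁ * hs
        have hb : dt v a₄ < dt v a₁ := by
          nlinarith [mul_pos hβ (sub_pos.2 h2)]
        apply not_mem_hull v
        intro y hy
        rw [hS] at hy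
        simp only [Set.mem_diff, Set.mem_insert_iff, Set.mem_singleton_iff] at hy
        obtain ⟨hyS, hyx⟩ := hy
        rcases hyS with rfl | rfl | rfl | rfl | rfl | rfl <;>
          first
          | exact absurd rfl hyx
          | (simp only [dt_add]; linarith)
      · -- x = a₁ + a₄
        obtain ⟨v, h23, h1⟩ := sep3' hdet2
        have e4 := e4gen v
        rw [← h23] at e4
        have h' : dt v a₄ = dt v a₂ + α * (dt v a₁ - dt v a₂) := by
          rw [e4]; linear_combination dt v a₂ * hs
        have hb : dt v a₂ < dt v a₄ := by
          nlinarith [mul_pos hα (sub_pos.2 h1)]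
        apply not_mem_hull v
        intro y hy
        rw [hS] at hy
        simp only [Set.mem_diff, Set.mem_insert_iff, Set.mem_singleton_iff] at hy
        obtain ⟨hyS, hyx⟩ := hy
        rcases hyS with rfl | rfl | rfl | rfl | rfl | rfl <;>
          first
          | exact absurd rfl hyx
          | (simp only [dt_add]; linarith)
      · -- x = a₂ + a₃
        obtain ⟨v, h23, h1⟩ := sep3 hdet2
        have e4 := e4gen v
        rw [← h23] at e4
        have h' : dt v a₄ = dt v a₂ + α * (dt v a₁ - dt v a₂) := by
          rw [e4]; linear_combination dt v a₂ * hs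
        have hb : dt v a₄ < dt v a₂ := by
          nlinarith [mul_pos hα (sub_pos.2 h1)]
        apply not_mem_hull v
        intro y hy
        rw [hS] at hy
        simp only [Set.mem_diff, Set.mem_insert_iff, Set.mem_singleton_iff] at hy
        obtain ⟨hyS, hyx⟩ := hy
        rcases hyS with rfl | rfl | rfl | rfl | rfl | rfl <;>
          first
          | exact absurd rfl hyx
          | (simp only [dt_add]; linarith)
      · -- x = a₂ + a₄
        obtain ⟨v, h13, h2⟩ := sep3' hdet3
        have e4 := e4gen v
        rw [← h13] at e4
        have h' : dt v a₄ = dt v a₁ + β * (dt v a₂ - dt v a₁) := by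
          rw [e4]; linear_combination dt v a₁ * hs
        have hb : dt v a₁ < dt v a₄ := by
          nlinarith [mul_pos hβ (sub_pos.2 h2)]
        apply not_mem_hull v
        intro y hy
        rw [hS] at hy
        simp only [Set.mem_diff, Set.mem_insert_iff, Set.mem_singleton_iff] at hy
        obtain ⟨hyS, hyx⟩ := hy
        rcases hyS with rfl | rfl | rfl | rfl | rfl | rfl <;>
          first
          | exact absurd rfl hyx
          | (simp only [dt_add]; linarith)
      · -- x = a₃ + a₄
        obtain ⟨v, h12, h3⟩ := sep3' hdet
        have e4 := e4gen v
        rw [← h12] at e4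
        have h' : dt v a₄ = dt v a₁ + γ * (dt v a₃ - dt v a₁) := by
          rw [e4]; linear_combination dt v a₁ * hs
        have hb : dt v a₁ < dt v a₄ := by
          nlinarith [mul_pos hγ (sub_pos.2 h3)]
        apply not_mem_hull v
        intro y hy
        rw [hS] at hy
        simp only [Set.mem_diff, Set.mem_insert_iff, Set.mem_singleton_iff] at hy
        obtain ⟨hyS, hyx⟩ := hy
        rcases hyS with rfl | rfl | rfl | rfl | rfl | rfl <;>
          first
          | exact absurd rfl hyx
          | (simp only [dt_add]; linarith)
  · -- central symmetry
    intro x hx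
    rw [hS] at hx
    simp only [Set.mem_insert_iff, Set.mem_singleton_iff] at hx
    rw [hS]
    simp only [Set.mem_insert_iff, Set.mem_singleton_iff]
    rcases hx with rfl | rfl | rfl | rfl | rfl | rfl
    · exact Or.inr (Or.inr (Or.inr (Or.inr (Or.inr (by abel)))))
    · exact Or.inr (Or.inr (Or.inr (Or.inr (Or.inl (by abel)))))
    · exact Or.inr (Or.inr (Or.inr (Or.inl (by abel))))
    · exact Or.inr (Or.inr (Or.inl (by abel)))
    · exact Or.inr (Or.inl (by abel))
    · exact Or.inl (by abel)
  · rw [hm]; congr 1; abel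
  · rw [hm]; congr 1; abel
  · rw [hm]; congr 1; abel
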